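/- Let λ > 0, l ∈ ℝ, 0 < ε < ∞, and f : (0,ε) → (0,∞) a continuous function with ∫₀^ε f(x) dx = +∞. Suppose a, b : (0,ε) → ℝ are differentiable, satisfy a'(x) = l·e^{2λx}·f(x)·b(x) and b'(x) = -l·e^{-2λx}·f(x)·a(x) for all x ∈ (0,ε), and ∫₀^ε (a(x)² + b(x)²) f(x) dx < ∞. Then a(x) → 0 and b(x) → 0 as x → 0⁺. -/

import Mathlib

open MeasureTheory Set Filter

/-- Solutions of the system `a' = l e^{2λx} f b`, `b' = -l e^{-2λx} f a` on `(0,ε)`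
(with `λ > 0`, `l` real, `0 < ε < ∞`, `f : (0,ε) → (0,∞)` continuous with divergent
integral) which are square-integrable with respect to `f dx` tend to `0` at `x = 0⁺`. -/
theorem transformed_system_limit_zero
    (lam l ε : ℝ) (hlam : 0 < lam) (hε : 0 < ε)
    (f : ℝ → ℝ) (hf_cont : ContinuousOn f (Set.Ioo 0 ε))
    (hf_pos : ∀ x ∈ Set.Ioo 0 ε, 0 < f x)
    (hf_div : ∫⁻ x in Set.Ioo 0 ε, ENNReal.ofReal (f x) = ⊤)
    (a b : ℝ → ℝ)
    (ha : ∀ x ∈ Set.Ioo 0 ε,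
      HasDerivAt a (l * Real.exp (2 * lam * x) * f x * b x) x)
    (hb : ∀ x ∈ Set.Ioo 0 ε,
      HasDerivAt b (-(l * Real.exp (-(2 * lam * x)) * f x * a x)) x)
    (hL2 : ∫⁻ x in Set.Ioo 0 ε,
      ENNReal.ofReal ((a x ^ 2 + b x ^ 2) * f x) < ⊤) :
    Filter.Tendsto a (nhdsWithin 0 (Set.Ioi 0)) (nhds 0) ∧
    Filter.Tendsto b (nhdsWithin 0 (Set.Ioi 0)) (nhds 0) := by
  set φ : ℝ → ℝ := fun x => a x ^ 2 + Real.exp (4 * lam * x) * b x ^ 2 with hφdef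
  -- derivative of φ
  have hφderiv : ∀ x ∈ Set.Ioo 0 ε,
      HasDerivAt φ (4 * lam * Real.exp (4 * lam * x) * b x ^ 2) x := by
    intro x hx
    have hA : HasDerivAt (fun y => a y ^ 2)
        ((2 : ℕ) * a x ^ 1 * (l * Real.exp (2 * lam * x) * f x * b x)) x :=
      (ha x hx).pow 2
    have hB : HasDerivAt (fun y => b y ^ 2)
        ((2 : ℕ) * b x ^ 1 * (-(l * Real.exp (-(2 * lam * x)) * f x * a x))) x :=
      (hb x hx).pow 2
    have hE : HasDerivAt (fun y => Real.exp (4 * lam * y))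
        (Real.exp (4 * lam * x) * (4 * lam * 1)) x :=
      ((hasDerivAt_id x).const_mul (4 * lam)).exp
    have := hA.add (hE.mul hB)
    refine this.congr_deriv ?_
    symm
    have hexp : Real.exp (4 * lam * x) * Real.exp (-(2 * lam * x))
        = Real.exp (2 * lam * x) := by
      rw [← Real.exp_add]; ring_nf
    push_cast
    linear_combination (2 * l * f x * a x * b x) * hexp
  -- φ is monotone on (0, ε)
  have hφmono : MonotoneOn φ (Set.Ioo 0 ε) := by
    apply monotoneOn_of_deriv_nonneg (convex_Ioo 0 ε)
    · exact fun x hx => (hφderiv x hx).differentiableAt.continuousAt.continuousWithinAt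
    · rw [interior_Ioo]
      exact fun x hx => (hφderiv x hx).differentiableAt.differentiableWithinAt
    · rw [interior_Ioo]
      intro x hx
      rw [(hφderiv x hx).deriv]
      positivity
  have hφnonneg : ∀ x, 0 ≤ φ x := by
    intro x; dsimp [φ]; positivity
  -- inf of φ is 0
  have hinf : ∀ c > 0, ∃ x ∈ Set.Ioo 0 ε, φ x < c := by
    intro c hc
    by_contra h
    push_neg at h
    set k : ℝ := Real.exp (-(4 * lam * ε)) * c with hkdef
    have hk : 0 < k := by positivity
    have hbound : ∀ x ∈ Set.Ioo 0 ε,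
        ENNReal.ofReal k * ENNReal.ofReal (f x)
          ≤ ENNReal.ofReal ((a x ^ 2 + b x ^ 2) * f x) := by
      intro x hx
      rw [← ENNReal.ofReal_mul hk.le]
      apply ENNReal.ofReal_le_ofReal
      have hfx := (hf_pos x hx).le
      have hφx := h x hx
      have h1 : Real.exp (-(4 * lam * x)) * φ x ≤ a x ^ 2 + b x ^ 2 := by
        have he1 : Real.exp (-(4 * lam * x)) ≤ 1 := by
          apply Real.exp_le_one_iff.mpr; nlinarith [hx.1]
        have he2 : Real.exp (-(4 * lam * x)) * Real.exp (4 * lam * x) = 1 := by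
          rw [← Real.exp_add]; simp
        dsimp [φ]
        nlinarith [sq_nonneg (a x), sq_nonneg (b x), Real.exp_pos (-(4 * lam * x))]
      have h2 : k ≤ Real.exp (-(4 * lam * x)) * φ x := by
        have he3 : Real.exp (-(4 * lam * ε)) ≤ Real.exp (-(4 * lam * x)) := by
          apply Real.exp_le_exp.mpr; nlinarith [hx.2]
        have := hφnonneg x
        rw [hkdef]
        nlinarith [Real.exp_pos (-(4 * lam * x)), hφx]
      nlinarith [h1, h2]
    have hge : (⊤ : ENNReal) ≤ ∫⁻ x in Set.Ioo 0 ε,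
        ENNReal.ofReal ((a x ^ 2 + b x ^ 2) * f x) := by
      calc (⊤ : ENNReal) = ENNReal.ofReal k * ∫⁻ x in Set.Ioo 0 ε, ENNReal.ofReal (f x) := by
            rw [hf_div, ENNReal.mul_top]
            simp [ENNReal.ofReal_eq_zero, not_le, hk]
        _ = ∫⁻ x in Set.Ioo 0 ε, ENNReal.ofReal k * ENNReal.ofReal (f x) := by
            rw [lintegral_const_mul' _ _ ENNReal.ofReal_ne_top]
        _ ≤ _ := by
            apply lintegral_mono_ae
            exact ae_restrict_of_forall_mem measurableSet_Ioo hbound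
    exact (hL2.trans_le hge).false
  -- φ tends to 0 at 0⁺
  have hφtend : Filter.Tendsto φ (nhdsWithin 0 (Set.Ioi 0)) (nhds 0) := by
    rw [NormedAddCommGroup.tendsto_nhds_zero]
    intro c hc
    obtain ⟨x₀, hx₀, hφx₀⟩ := hinf c hc
    filter_upwards [Ioo_mem_nhdsGT_of_mem (Set.mem_Ico.mpr ⟨le_refl 0, hx₀.1⟩)] with x hx
    have hxmem : x ∈ Set.Ioo 0 ε := ⟨hx.1, hx.2.trans hx₀.2⟩
    have : φ x ≤ φ x₀ := hφmono hxmem hx₀ hx.2.le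
    rw [Real.norm_eq_abs, abs_of_nonneg (hφnonneg x)]
    linarith
  have hsqrt : Filter.Tendsto (fun x => Real.sqrt (φ x))
      (nhdsWithin 0 (Set.Ioi 0)) (nhds 0) := by
    have := (Real.continuous_sqrt.tendsto 0).comp hφtend
    simpa [Function.comp_def] using this
  have hmem : Set.Ioo 0 ε ∈ nhdsWithin (0:ℝ) (Set.Ioi 0) :=
    Ioo_mem_nhdsGT_of_mem (Set.mem_Ico.mpr ⟨le_refl 0, hε⟩)
  constructor
  · apply squeeze_zero_norm' _ hsqrt
    filter_upwards [hmem] with x hx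
    rw [Real.norm_eq_abs, ← Real.sqrt_sq_eq_abs]
    apply Real.sqrt_le_sqrt
    dsimp [φ]
    nlinarith [mul_nonneg (Real.exp_pos (4 * lam * x)).le (sq_nonneg (b x))]
  · apply squeeze_zero_norm' _ hsqrt
    filter_upwards [hmem] with x hx
    rw [Real.norm_eq_abs, ← Real.sqrt_sq_eq_abs]
    apply Real.sqrt_le_sqrt
    have he : 1 ≤ Real.exp (4 * lam * x) := by
      apply Real.one_le_exp; nlinarith [hx.1]
    dsimp [φ]
    nlinarith [sq_nonneg (a x), sq_nonneg (b x)]
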